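/- arXiv:1410.7981 — 3 statements merged into one kernel-verified Lean document; each statement's English description precedes it below -/
import Mathlib

section
/- Conversely, let w ∈ S_∞ and p < q with w(p) < w(q), and suppose there is no r with p < r < q and w(p) < w(r) < w(q). Then ℓ(w·t_{pq}) = ℓ(w) + 1. -/
/-- `S_∞`: a permutation of `ℕ` has finite support. -/
def FinSupp (w : Equiv.Perm ℕ) : Prop := ∃ N, ∀ i, N ≤ i → w i = i

/-- The inversion number `ℓ(w) = #{i < j : w(i) > w(j)}`. -/
noncomputable def ell (w : Equiv.Perm ℕ) : ℕ := Set.ncard {p : ℕ × ℕ | p.1 < p.2 ∧ w p.2 < w p.1}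

/-- The pairing map used to match inversions of `w·t_{pq}` with those of `w`. -/
def gmap (p q i j : ℕ) : ℕ × ℕ :=
  if i < p ∨ q < j then (Equiv.swap p q i, Equiv.swap p q j) else (i, j)

lemma gmap_invol (p q : ℕ) (hpq : p < q) :
    Function.Involutive (fun x : ℕ × ℕ => gmap p q x.1 x.2) := by
  rintro ⟨i, j⟩
  by_cases hc : i < p ∨ q < j
  · have hc' : Equiv.swap p q i < p ∨ q < Equiv.swap p q j := by
      rcases hc with h1 | h1
      · left; rwa [Equiv.swap_apply_of_ne_of_ne (by omega) (by omega)]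
      · right; rwa [Equiv.swap_apply_of_ne_of_ne (by omega) (by omega)]
    simp [gmap, hc, hc']
  · simp [gmap, hc]

lemma key (w : Equiv.Perm ℕ) (p q : ℕ) (hpq : p < q) (hw : w p < w q)
    (h : ¬ ∃ r, p < r ∧ r < q ∧ w p < w r ∧ w r < w q) (i j : ℕ) :
    (i < j ∧ w (Equiv.swap p q j) < w (Equiv.swap p q i)) ↔
      (gmap p q i j = (p, q) ∨
        ((gmap p q i j).1 < (gmap p q i j).2 ∧ w (gmap p q i j).2 < w (gmap p q i j).1)) := by
  have hh1 : ¬ p < j ∨ ¬ j < q ∨ ¬ w p < w j ∨ ¬ w j < w q := by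
    by_contra hc; push_neg at hc
    exact h ⟨j, hc.1, hc.2.1, hc.2.2.1, hc.2.2.2⟩
  have hh2 : ¬ p < i ∨ ¬ i < q ∨ ¬ w p < w i ∨ ¬ w i < w q := by
    by_contra hc; push_neg at hc
    exact h ⟨i, hc.1, hc.2.1, hc.2.2.1, hc.2.2.2⟩
  have d1 : j = p ∨ w j ≠ w p := by
    rcases eq_or_ne j p with h' | h'
    · exact Or.inl h'
    · exact Or.inr (w.injective.ne h')
  have d2 : j = q ∨ w j ≠ w q := by
    rcases eq_or_ne j q with h' | h'
    · exact Or.inl h'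
    · exact Or.inr (w.injective.ne h')
  have d3 : i = p ∨ w i ≠ w p := by
    rcases eq_or_ne i p with h' | h'
    · exact Or.inl h'
    · exact Or.inr (w.injective.ne h')
  have d4 : i = q ∨ w i ≠ w q := by
    rcases eq_or_ne i q with h' | h'
    · exact Or.inl h'
    · exact Or.inr (w.injective.ne h')
  by_cases hcond : i < p ∨ q < j
  · simp only [gmap, if_pos hcond, Equiv.swap_apply_def, Prod.mk.injEq]
    split_ifs <;> subst_vars <;> omega
  · simp only [gmap, if_neg hcond, Equiv.swap_apply_def, Prod.mk.injEq]
    split_ifs <;> subst_vars <;> omega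

/-- If `p < q`, `w(p) < w(q)` and there is no `r` with `p < r < q` and
`w(p) < w(r) < w(q)`, then `ℓ(w·t_{pq}) = ℓ(w) + 1`. -/
theorem stmt3 (w : Equiv.Perm ℕ) (hs : FinSupp w) (p q : ℕ) (hpq : p < q)
    (hw : w p < w q)
    (h : ¬ ∃ r, p < r ∧ r < q ∧ w p < w r ∧ w r < w q) :
    ell (w * Equiv.swap p q) = ell w + 1 := by
  obtain ⟨N, hN⟩ := hs
  have hwlt : ∀ k, k < N → w k < N := by
    intro k hk
    by_contra hk'
    have h1 : w (w k) = w k := hN _ (le_of_not_gt hk')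
    have h2 : w k = k := w.injective h1
    omega
  have hfin : {x : ℕ × ℕ | x.1 < x.2 ∧ w x.2 < w x.1}.Finite := by
    apply Set.Finite.subset ((Set.finite_Iio N).prod (Set.finite_Iio N))
    rintro ⟨i, j⟩ ⟨hij, hinv⟩
    have hjN : j < N := by
      by_contra hj
      have hwj : w j = j := hN j (le_of_not_gt hj)
      rcases lt_or_ge i N with hi | hi
      · have := hwlt i hi; simp only at hij hinv; omega
      · have := hN i hi; simp only at hij hinv; omega
    simp only [Set.mem_prod, Set.mem_Iio]
    simp only at hij
    omega
  have hinvol := gmap_invol p q hpq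
  have hinj : Function.Injective (fun x : ℕ × ℕ => gmap p q x.1 x.2) := hinvol.injective
  have hset : {x : ℕ × ℕ | x.1 < x.2 ∧ (w * Equiv.swap p q) x.2 < (w * Equiv.swap p q) x.1}
      = (fun x : ℕ × ℕ => gmap p q x.1 x.2) ''
          (insert (p, q) {x : ℕ × ℕ | x.1 < x.2 ∧ w x.2 < w x.1}) := by
    ext x
    have hmem : x ∈ (fun x : ℕ × ℕ => gmap p q x.1 x.2) ''
          (insert (p, q) {x : ℕ × ℕ | x.1 < x.2 ∧ w x.2 < w x.1}) ↔
        gmap p q x.1 x.2 ∈ insert (p, q) {x : ℕ × ℕ | x.1 < x.2 ∧ w x.2 < w x.1} := by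
      constructor
      · rintro ⟨y, hy, rfl⟩
        simpa [hinvol y] using hy
      · intro hx
        exact ⟨gmap p q x.1 x.2, hx, hinvol x⟩
    rw [Set.mem_setOf_eq, hmem, Set.mem_insert_iff, Set.mem_setOf_eq]
    simp only [Equiv.Perm.mul_apply]
    exact key w p q hpq hw h x.1 x.2
  rw [ell, ell, hset, Set.ncard_image_of_injective _ hinj,
      Set.ncard_insert_of_notMem (by simp only [Set.mem_setOf_eq]; omega) hfin]
end

section
/- Let p ≤ ν < q and w ∈ S_∞. Define the sequence r₀ = p, and for j ≥ 1 let r_j be the index with r_j > r_{j−1}, w(r_j) > w(r_{j−1}), and w(r_j) minimal among such indices (such r_j always exists since w fixes all large integers). Let k be minimal with r_k > ν. Then ℓ(w·t_{r_{k−1}, r_k}) = ℓ(w) + 1 and there is no r > r_k with w(r_{k−1}) < w(r) < w(r_k). -/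
lemma inv_finite (u : Equiv.Perm ℕ) (hs : FinSupp u) :
    {p : ℕ × ℕ | p.1 < p.2 ∧ u p.2 < u p.1}.Finite := by
  obtain ⟨N, hN⟩ := hs
  have hlt : ∀ i, i < N → u i < N := by
    intro i hi
    by_contra h
    have h1 : u (u i) = u i := hN (u i) (le_of_not_gt h)
    have := u.injective h1
    omega
  apply Set.Finite.subset ((Set.finite_Iio N).prod (Set.finite_Iio N))
  rintro ⟨i, j⟩ ⟨hij, huv⟩
  have hij' : i < j := hij
  have huv' : u j < u i := huv
  simp only [Set.mem_prod, Set.mem_Iio]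
  have hjN : j < N := by
    by_contra hj
    have hj' : u j = j := hN j (le_of_not_gt hj)
    rcases lt_or_ge i N with hi | hi
    · have := hlt i hi; omega
    · have := hN i hi; omega
  refine ⟨by omega, hjN⟩

/-- Given `p ≤ ν` and the sequence `r₀ = p`,
`r_{j+1} = ` the index `> r_j` with `w(r_{j+1}) > w(r_j)` and `w(r_{j+1})`
minimal among such, stopped at the first `k` with `r_k > ν`:
then `ℓ(w·t_{r_{k−1},r_k}) = ℓ(w) + 1` and there is no `r > r_k` with
`w(r_{k−1}) < w(r) < w(r_k)` (i.e. `m_{r_{k−1},r_k}(w) = 0`). -/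
theorem stmt8 (w : Equiv.Perm ℕ) (hs : FinSupp w) (ν p : ℕ) (hp : p ≤ ν)
    (r : ℕ → ℕ) (k : ℕ) (hr0 : r 0 = p)
    (hstep : ∀ j, j < k → r j < r (j + 1) ∧ w (r j) < w (r (j + 1)) ∧
      ∀ m, r j < m → w (r j) < w m → w (r (j + 1)) ≤ w m)
    (hbefore : ∀ j, j < k → r j ≤ ν) (hk : ν < r k) :
    ell (w * Equiv.swap (r (k - 1)) (r k)) = ell w + 1 ∧
    ¬ ∃ m, r k < m ∧ w (r (k - 1)) < w m ∧ w m < w (r k) := by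
  have hk0 : 0 < k := by
    rcases Nat.eq_zero_or_pos k with h | h
    · subst h; rw [hr0] at hk; omega
    · exact h
  have hk1 : k - 1 + 1 = k := Nat.succ_pred_eq_of_pos hk0
  obtain ⟨hab, hwab, hmin⟩ := hstep (k - 1) (by omega)
  rw [hk1] at hab hwab hmin
  set a := r (k - 1) with ha
  set b := r k with hb
  -- minimality: no index m > a has w a < w m < w b
  have hnm : ∀ m, a < m → w a < w m → w b ≤ w m := hmin
  constructor
  · -- length part
    set v := w * Equiv.swap a b with hv
    have hva : ∀ x, v x = w (Equiv.swap a b x) := fun x => rfl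
    have hCi : ∀ i, w a < w i → w i < w b → i < a := by
      intro i h1 h2
      rcases lt_trichotomy i a with h | h | h
      · exact h
      · subst h; omega
      · exact absurd (hnm i h h1) (not_le.2 h2)
    have hne_ab : a ≠ b := Nat.ne_of_lt hab
    -- the matching involution
    set g : ℕ × ℕ → ℕ × ℕ :=
      fun q => (q.1, if w a < w q.1 ∧ w q.1 < w b then Equiv.swap a b q.2 else q.2) with hg
    have hgg : ∀ q, g (g q) = q := by
      rintro ⟨i, j⟩
      simp only [hg]
      by_cases hC : w a < w i ∧ w i < w b
      · simp [hC, Equiv.swap_apply_self]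
      · simp [hC]
    set S := {q : ℕ × ℕ | q.1 < q.2 ∧ v q.2 < v q.1} \ {(a, b)} with hS
    set T := {q : ℕ × ℕ | q.1 < q.2 ∧ w q.2 < w q.1} with hT
    have winj : ∀ {x y : ℕ}, w x = w y → x = y := fun h => w.injective h
    have hST : Set.MapsTo g S T := by
      rintro ⟨i, j⟩ ⟨⟨hij, hvij⟩, hne⟩
      simp only [hva, Set.mem_setOf_eq] at hvij
      simp only [hT, hg, Set.mem_setOf_eq]
      by_cases hC : w a < w i ∧ w i < w b
      · have hia : i < a := hCi i hC.1 hC.2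
        have hia' : i ≠ a := Nat.ne_of_lt hia
        have hib' : i ≠ b := Nat.ne_of_lt (lt_trans hia hab)
        rw [Equiv.swap_apply_of_ne_of_ne hia' hib'] at hvij
        simp only [if_pos hC]
        refine ⟨?_, hvij⟩
        rcases eq_or_ne j a with hja | hja
        · subst hja; rw [Equiv.swap_apply_left]; exact lt_trans hia hab
        · rcases eq_or_ne j b with hjb | hjb
          · subst hjb; rw [Equiv.swap_apply_right]; exact hia
          · rw [Equiv.swap_apply_of_ne_of_ne hja hjb]; exact hij
      · simp only [if_neg hC]
        refine ⟨hij, ?_⟩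
        rcases eq_or_ne i a with hia | hia
        · subst hia
          rw [Equiv.swap_apply_left] at hvij
          have hja : j ≠ a := Nat.ne_of_gt hij
          rcases eq_or_ne j b with hjb | hjb
          · exact absurd (show ((a : ℕ), j) ∈ ({((a : ℕ), b)} : Set (ℕ × ℕ)) by simp [hjb]) hne
          · rw [Equiv.swap_apply_of_ne_of_ne hja hjb] at hvij
            by_contra h
            have h1 : w a < w j := by
              rcases lt_or_eq_of_le (not_lt.1 h) with h' | h'
              · exact h'
              · exact absurd (winj h').symm hja
            exact absurd (hnm j hij h1) (not_le.2 hvij)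
        · rcases eq_or_ne i b with hib | hib
          · subst hib
            rw [Equiv.swap_apply_right] at hvij
            have hja : j ≠ a := Nat.ne_of_gt (lt_trans hab hij)
            have hjb : j ≠ b := Nat.ne_of_gt hij
            rw [Equiv.swap_apply_of_ne_of_ne hja hjb] at hvij
            exact lt_trans hvij hwab
          · rw [Equiv.swap_apply_of_ne_of_ne hia hib] at hvij
            rcases eq_or_ne j a with hja | hja
            · subst hja
              rw [Equiv.swap_apply_left] at hvij
              exact lt_trans hwab hvij
            · rcases eq_or_ne j b with hjb | hjb
              · subst hjb
                rw [Equiv.swap_apply_right] at hvij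
                push_neg at hC
                have h1 := hC hvij
                rcases lt_or_eq_of_le h1 with h' | h'
                · exact h'
                · exact absurd (winj h') hib.symm
              · rw [Equiv.swap_apply_of_ne_of_ne hja hjb] at hvij
                exact hvij
    have hTS : Set.MapsTo g T S := by
      rintro ⟨i, j⟩ ⟨hij, hwij⟩
      simp only [hS, hg, Set.mem_diff, Set.mem_setOf_eq, Set.mem_singleton_iff]
      by_cases hC : w a < w i ∧ w i < w b
      · have hia : i < a := hCi i hC.1 hC.2
        have hia' : i ≠ a := Nat.ne_of_lt hia
        have hib' : i ≠ b := Nat.ne_of_lt (lt_trans hia hab)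
        simp only [if_pos hC]
        constructor
        · constructor
          · rcases eq_or_ne j a with hja | hja
            · subst hja; rw [Equiv.swap_apply_left]; exact lt_trans hia hab
            · rcases eq_or_ne j b with hjb | hjb
              · subst hjb; exact absurd hwij (not_lt.2 (le_of_lt hC.2))
              · rw [Equiv.swap_apply_of_ne_of_ne hja hjb]; exact hij
          · simp only [hva]
            rw [Equiv.swap_apply_self, Equiv.swap_apply_of_ne_of_ne hia' hib']
            exact hwij
        · intro h
          exact hia' (congrArg Prod.fst h)
      · simp only [if_neg hC]
        constructor
        · refine ⟨hij, ?_⟩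
          simp only [hva]
          rcases eq_or_ne i a with hia | hia
          · subst hia
            rw [Equiv.swap_apply_left]
            have hja : j ≠ a := Nat.ne_of_gt hij
            rcases eq_or_ne j b with hjb | hjb
            · subst hjb; exact absurd hwij (not_lt.2 (le_of_lt hwab))
            · rw [Equiv.swap_apply_of_ne_of_ne hja hjb]
              exact lt_trans hwij hwab
          · rcases eq_or_ne i b with hib | hib
            · subst hib
              rw [Equiv.swap_apply_right]
              have hja : j ≠ a := Nat.ne_of_gt (lt_trans hab hij)
              have hjb : j ≠ b := Nat.ne_of_gt hij
              rw [Equiv.swap_apply_of_ne_of_ne hja hjb]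
              by_contra h
              have h1 : w a < w j := by
                rcases lt_or_eq_of_le (not_lt.1 h) with h' | h'
                · exact h'
                · exact absurd (winj h'.symm) hja
              exact absurd (hnm j (lt_trans hab hij) h1) (not_le.2 hwij)
            · rw [Equiv.swap_apply_of_ne_of_ne hia hib]
              rcases eq_or_ne j a with hja | hja
              · subst hja
                rw [Equiv.swap_apply_left]
                have hwij' : w a < w i := hwij
                push_neg at hC
                have h1 := hC hwij'
                rcases lt_or_eq_of_le h1 with h' | h'
                · exact h'
                · exact absurd (winj h') hib.symm
              · rcases eq_or_ne j b with hjb | hjb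
                · subst hjb
                  rw [Equiv.swap_apply_right]
                  exact lt_trans hwab hwij
                · rw [Equiv.swap_apply_of_ne_of_ne hja hjb]
                  exact hwij
        · intro h
          have h1 : i = a := congrArg Prod.fst h
          have h2 : j = b := congrArg Prod.snd h
          subst h1; subst h2
          exact absurd hwij (not_lt.2 (le_of_lt hwab))
    have hbij : Set.BijOn g S T :=
      Set.InvOn.bijOn ⟨fun x _ => hgg x, fun x _ => hgg x⟩ hST hTS
    have hvfin : FinSupp v := by
      obtain ⟨N, hN⟩ := hs
      refine ⟨max N (max a b + 1), fun i hi => ?_⟩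
      have h1 : a ≠ i := by omega
      have h2 : b ≠ i := by omega
      rw [hva, Equiv.swap_apply_of_ne_of_ne (Ne.symm h1) (Ne.symm h2)]
      exact hN i (le_trans (le_max_left _ _) hi)
    have hfinv : {q : ℕ × ℕ | q.1 < q.2 ∧ v q.2 < v q.1}.Finite := inv_finite v hvfin
    have hmem : (a, b) ∈ {q : ℕ × ℕ | q.1 < q.2 ∧ v q.2 < v q.1} := by
      refine ⟨hab, ?_⟩
      simp only [hva, Equiv.swap_apply_left, Equiv.swap_apply_right]
      exact hwab
    have hcard1 : S.ncard + 1 = {q : ℕ × ℕ | q.1 < q.2 ∧ v q.2 < v q.1}.ncard :=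
      Set.ncard_diff_singleton_add_one hmem hfinv
    have hcard2 : S.ncard = T.ncard := by
      rw [← hbij.image_eq, Set.ncard_image_of_injOn hbij.injOn]
    show {q : ℕ × ℕ | q.1 < q.2 ∧ v q.2 < v q.1}.ncard = T.ncard + 1
    omega
  · rintro ⟨m, hm1, hm2, hm3⟩
    exact absurd (hnm m (lt_trans hab hm1) hm2) (not_le.2 hm3)
end

section
/- Let w ∈ S_∞, p ≤ ν < q and p' ≤ ν < q' with ℓ(w·t_{pq}) = ℓ(w) + 1 and ℓ(w·t_{p'q'}) = ℓ(w) + 1. If it is not the case that (q' < q and w(q') > w(p)) and not the case that (p' < q and w(p') > w(p)) — i.e. p', q' ∉ {r : r < q and w(r) > w(p)} — then w(p') ≤ w(p) and w(q') ≤ w(q). -/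
/-- The inversion set of a permutation. -/
def InvSet (w : Equiv.Perm ℕ) : Set (ℕ × ℕ) := {x | x.1 < x.2 ∧ w x.2 < w x.1}

lemma ell_eq_ncard (w : Equiv.Perm ℕ) : ell w = (InvSet w).ncard := rfl

lemma invSet_finite (w : Equiv.Perm ℕ) (hs : FinSupp w) : (InvSet w).Finite := by
  obtain ⟨N, hN⟩ := hs
  apply ((Set.finite_Iio N).prod (Set.finite_Iio N)).subset
  rintro ⟨i, j⟩ ⟨hij, hw⟩
  change w j < w i at hw
  simp only [Set.mem_prod, Set.mem_Iio]
  have hiN : i < N := by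
    by_contra h
    push_neg at h
    have hj : N ≤ j := le_trans h hij.le
    rw [hN i h, hN j hj] at hw
    omega
  refine ⟨hiN, ?_⟩
  by_contra h
  push_neg at h
  rw [hN j h] at hw
  have hwiN : w i < N := by
    by_contra h2
    push_neg at h2
    have h3 : w (w i) = w i := hN (w i) h2
    have h4 : w i = i := w.injective h3
    omega
  omega

lemma finSupp_mul_swap (w : Equiv.Perm ℕ) (hs : FinSupp w) (p q : ℕ) :
    FinSupp (w * Equiv.swap p q) := by
  obtain ⟨N, hN⟩ := hs
  refine ⟨max N (max p q + 1), fun i hi => ?_⟩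
  have hip : i ≠ p := by omega
  have hiq : i ≠ q := by omega
  simp only [Equiv.Perm.mul_apply, Equiv.swap_apply_of_ne_of_ne hip hiq]
  exact hN i (by omega)

/-- Membership in the inversion set of a transposition. -/
lemma mem_invSet_swap {p q : ℕ} (hpq : p < q) (i j : ℕ) :
    (i, j) ∈ InvSet (Equiv.swap p q) ↔
      (i = p ∧ p < j ∧ j ≤ q) ∨ (p < i ∧ i < j ∧ j = q) := by
  simp only [InvSet, Set.mem_setOf_eq, Equiv.swap_apply_def]
  split_ifs <;> omega

/-- The key counting identity: multiplying by a transposition changes the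
inversion number only through pairs inverted by the transposition. -/
lemma key_identity (w : Equiv.Perm ℕ) (hs : FinSupp w) (p q : ℕ) :
    ell (w * Equiv.swap p q) + (InvSet w ∩ InvSet (Equiv.swap p q)).ncard
      = ell w + (InvSet (w * Equiv.swap p q) ∩ InvSet (Equiv.swap p q)).ncard := by
  set t : Equiv.Perm ℕ := Equiv.swap p q with ht
  set u : Equiv.Perm ℕ := w * t with hu
  have hu_fin : (InvSet u).Finite := invSet_finite u (finSupp_mul_swap w hs p q)
  have hw_fin : (InvSet w).Finite := invSet_finite w hs
  have htt : ∀ a : ℕ, t (t a) = a := fun a => Equiv.swap_apply_self p q a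
  have huw : ∀ a : ℕ, u a = w (t a) := fun a => rfl
  have hwu : ∀ a : ℕ, w a = u (t a) := by
    intro a
    rw [huw, htt]
  -- the flip map
  set φ : ℕ × ℕ → ℕ × ℕ := fun x => (t x.1, t x.2) with hφ
  have hφinj : Function.Injective φ := by
    rintro ⟨a1, a2⟩ ⟨b1, b2⟩ h
    simp only [hφ, Prod.mk.injEq] at h
    exact Prod.ext (t.injective h.1) (t.injective h.2)
  have hmaps : ∀ (v : Equiv.Perm ℕ), (∀ a, v a = (v * t) (t a)) →
      ∀ x ∈ InvSet (v * t) \ InvSet t, φ x ∈ InvSet v \ InvSet t := by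
    rintro v hv ⟨i, j⟩ ⟨⟨hij, hinv⟩, hnT⟩
    have htij : t i < t j := by
      rcases lt_trichotomy (t i) (t j) with h | h | h
      · exact h
      · exact absurd (t.injective h) (by omega)
      · exact absurd ⟨hij, h⟩ hnT
    refine ⟨⟨htij, ?_⟩, ?_⟩
    · show v (t j) < v (t i)
      rw [hv (t j), hv (t i)]
      simpa only [htt] using hinv
    · rintro ⟨-, hbad⟩
      simp only [hφ, htt] at hbad
      omega
  have himg : φ '' (InvSet u \ InvSet t) = InvSet w \ InvSet t := by
    apply Set.Subset.antisymm
    · rintro y ⟨x, hx, rfl⟩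
      exact hmaps w (fun a => by rw [huw, htt]) x hx
    · intro y hy
      have hwut : w = u * t := by
        ext a
        simp only [Equiv.Perm.mul_apply]
        rw [hwu]
      have h1 : φ y ∈ InvSet u \ InvSet t := by
        apply hmaps u (fun a => by simp only [Equiv.Perm.mul_apply, htt]) y
        rwa [← hwut]
      refine ⟨φ y, h1, ?_⟩
      simp only [hφ, htt]
  have hdiff : (InvSet u \ InvSet t).ncard = (InvSet w \ InvSet t).ncard := by
    rw [← himg, Set.ncard_image_of_injective _ hφinj]
  have e1 : (InvSet u ∩ InvSet t).ncard + (InvSet u \ InvSet t).ncard = ell u :=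
    Set.ncard_inter_add_ncard_diff_eq_ncard _ _ hu_fin
  have e2 : (InvSet w ∩ InvSet t).ncard + (InvSet w \ InvSet t).ncard = ell w :=
    Set.ncard_inter_add_ncard_diff_eq_ncard _ _ hw_fin
  omega

lemma swap_fix (p q s : ℕ) (h1 : p < s) (h2 : s < q) : Equiv.swap p q s = s :=
  Equiv.swap_apply_of_ne_of_ne (by omega) (by omega)

/-- If `ℓ(w t_{pq}) = ℓ(w) + 1` with `p < q`, then `w p < w q` and there is no
`r` strictly between `p` and `q` with `w p < w r < w q`. -/
lemma ascent_cover (w : Equiv.Perm ℕ) (hs : FinSupp w) {p q : ℕ} (hpq : p < q)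
    (hl : ell (w * Equiv.swap p q) = ell w + 1) :
    w p < w q ∧ ∀ r, p < r → r < q → ¬(w p < w r ∧ w r < w q) := by
  set t : Equiv.Perm ℕ := Equiv.swap p q with ht
  set u : Equiv.Perm ℕ := w * t with hu
  have hu_fin : (InvSet u).Finite := invSet_finite u (finSupp_mul_swap w hs p q)
  have hw_fin : (InvSet w).Finite := invSet_finite w hs
  have key := key_identity w hs p q
  rw [← ht, ← hu] at key
  have hcnt : (InvSet u ∩ InvSet t).ncard = (InvSet w ∩ InvSet t).ncard + 1 := by
    omega
  have hup : u p = w q := by simp [hu, ht]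
  have huq : u q = w p := by simp [hu, ht]
  have hus : ∀ s, p < s → s < q → u s = w s := by
    intro s h1 h2
    simp only [hu, Equiv.Perm.mul_apply, ht, swap_fix p q s h1 h2]
  have hwpq : w p < w q := by
    by_contra hcon
    push_neg at hcon
    have hne : w q ≠ w p := fun h => by have := w.injective h; omega
    have hlt : w q < w p := lt_of_le_of_ne hcon hne
    -- the inversion sets over T satisfy Inv u ∩ T ⊊ Inv w ∩ T
    have hsub : InvSet u ∩ InvSet t ⊆ InvSet w ∩ InvSet t := by
      rintro ⟨i, j⟩ ⟨⟨hij, hinv⟩, hT⟩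
      change u j < u i at hinv
      refine ⟨⟨hij, ?_⟩, hT⟩
      show w j < w i
      rcases (mem_invSet_swap hpq i j).1 hT with ⟨h1, h2, h3⟩ | ⟨h1, h2, h3⟩
      · -- i = p, p < j ≤ q
        subst h1
        rcases eq_or_lt_of_le h3 with h4 | h4
        · subst h4
          rw [hup, huq] at hinv
          omega
        · rw [hup, hus j h2 h4] at hinv
          omega
      · -- (s, q) case
        subst h3
        rw [huq, hus i h1 h2] at hinv
        omega
    have hmem : (p, q) ∈ (InvSet w ∩ InvSet t) := by
      exact ⟨⟨hpq, hlt⟩, (mem_invSet_swap hpq p q).2 (Or.inl ⟨rfl, hpq, le_refl q⟩)⟩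
    have hnmem : (p, q) ∉ (InvSet u ∩ InvSet t) := by
      rintro ⟨⟨-, hbad⟩, -⟩
      rw [hup, huq] at hbad
      omega
    have hss : InvSet u ∩ InvSet t ⊂ InvSet w ∩ InvSet t :=
      ⟨hsub, fun h => hnmem (h hmem)⟩
    have := Set.ncard_lt_ncard hss (hw_fin.inter_of_left _)
    omega
  refine ⟨hwpq, ?_⟩
  rintro r h1 h2 ⟨h3, h4⟩
  -- now show Inv u ∩ T contains Inv w ∩ T plus (p,r) and (r,q)
  have hsub : InvSet w ∩ InvSet t ⊆ InvSet u ∩ InvSet t := by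
    rintro ⟨i, j⟩ ⟨⟨hij, hinv⟩, hT⟩
    change w j < w i at hinv
    refine ⟨⟨hij, ?_⟩, hT⟩
    show u j < u i
    rcases (mem_invSet_swap hpq i j).1 hT with ⟨g1, g2, g3⟩ | ⟨g1, g2, g3⟩
    · subst g1
      rcases eq_or_lt_of_le g3 with g4 | g4
      · subst g4; omega
      · rw [hup, hus j g2 g4]
        omega
    · subst g3
      rw [huq, hus i g1 g2]
      omega
  have hpr_mem : (p, r) ∈ InvSet u ∩ InvSet t := by
    refine ⟨⟨h1, ?_⟩, (mem_invSet_swap hpq p r).2 (Or.inl ⟨rfl, h1, h2.le⟩)⟩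
    show u r < u p
    rw [hup, hus r h1 h2]
    omega
  have hrq_mem : (r, q) ∈ InvSet u ∩ InvSet t := by
    refine ⟨⟨h2, ?_⟩, (mem_invSet_swap hpq r q).2 (Or.inr ⟨h1, h2, rfl⟩)⟩
    show u q < u r
    rw [huq, hus r h1 h2]
    omega
  have hpr_not : (p, r) ∉ insert (r, q) (InvSet w ∩ InvSet t) := by
    rintro (h | ⟨⟨-, hbad⟩, -⟩)
    · simp only [Prod.mk.injEq] at h
      omega
    · change w r < w p at hbad
      omega
  have hrq_not : (r, q) ∉ InvSet w ∩ InvSet t := by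
    rintro ⟨⟨-, hbad⟩, -⟩
    change w q < w r at hbad
    omega
  have hbig : insert (p, r) (insert (r, q) (InvSet w ∩ InvSet t)) ⊆ InvSet u ∩ InvSet t := by
    rintro x (rfl | rfl | hx)
    · exact hpr_mem
    · exact hrq_mem
    · exact hsub hx
  have hfin1 : (InvSet w ∩ InvSet t).Finite := hw_fin.inter_of_left _
  have hc1 : (insert (r, q) (InvSet w ∩ InvSet t)).ncard = (InvSet w ∩ InvSet t).ncard + 1 :=
    Set.ncard_insert_of_notMem hrq_not hfin1
  have hc2 : (insert (p, r) (insert (r, q) (InvSet w ∩ InvSet t))).ncard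
      = (insert (r, q) (InvSet w ∩ InvSet t)).ncard + 1 :=
    Set.ncard_insert_of_notMem hpr_not (hfin1.insert _)
  have hle := Set.ncard_le_ncard hbig (hu_fin.inter_of_left _)
  omega

/-- Let `p ≤ ν < q` and `p' ≤ ν < q'` with `ℓ(w t_{pq}) = ℓ(w t_{p'q'}) = ℓ(w) + 1`.
If `p', q' ∉ {r : r < q ∧ w(r) > w(p)}`, then `w(p') ≤ w(p)` and `w(q') ≤ w(q)`. -/
theorem stmt9 (w : Equiv.Perm ℕ) (hs : FinSupp w) (ν p q p' q' : ℕ)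
    (h1 : p ≤ ν) (h2 : ν < q) (h3 : p' ≤ ν) (h4 : ν < q')
    (hl : ell (w * Equiv.swap p q) = ell w + 1)
    (hl' : ell (w * Equiv.swap p' q') = ell w + 1)
    (hq' : ¬ (q' < q ∧ w p < w q')) (hp' : ¬ (p' < q ∧ w p < w p')) :
    w p' ≤ w p ∧ w q' ≤ w q := by
  obtain ⟨hwpq, hcov⟩ := ascent_cover w hs (lt_of_le_of_lt h1 h2) hl
  obtain ⟨hwpq', hcov'⟩ := ascent_cover w hs (lt_of_le_of_lt h3 h4) hl'
  have hp'q : p' < q := lt_of_le_of_lt h3 h2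
  have hwp' : w p' ≤ w p := not_lt.1 fun h => hp' ⟨hp'q, h⟩
  refine ⟨hwp', ?_⟩
  rcases lt_trichotomy q' q with h | h | h
  · have : w q' ≤ w p := not_lt.1 fun hh => hq' ⟨h, hh⟩
    exact le_trans this hwpq.le
  · subst h; exact le_refl _
  · by_contra hh
    push_neg at hh
    exact hcov' q hp'q h ⟨lt_of_le_of_lt hwp' hwpq, hh⟩
end
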